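/- Let A be a commutative ring in which 2 is invertible, let n ≥ 1 be an integer, and let F, a ∈ A. Then B := A[u, v]/(uv − F, u^n + v^n − 2a) is a free A-module of rank 2n; more precisely, the images of the 2n elements 1, u, u², …, u^(n−1), v, v², …, v^(n−1), and u^n − v^n form an A-basis of B. -/

import Mathlib

noncomputable section

/-- The ideal `(uv − F, uⁿ + vⁿ − 2a)` in `A[u, v]`. -/
def dihedralIdeal (A : Type) [CommRing A] (n : ℕ) (F a : A) :
    Ideal (MvPolynomial (Fin 2) A) :=
  Ideal.span {MvPolynomial.X 0 * MvPolynomial.X 1 - MvPolynomial.C F,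
    MvPolynomial.X 0 ^ n + MvPolynomial.X 1 ^ n - MvPolynomial.C (2 * a)}

/-- The ring `B = A[u, v]/(uv − F, uⁿ + vⁿ − 2a)`, the coordinate ring of the simple
dihedral cover of `Spec A` determined by the data `F` and `a`. -/
abbrev DihedralCoverRing (A : Type) [CommRing A] (n : ℕ) (F a : A) : Type :=
  MvPolynomial (Fin 2) A ⧸ dihedralIdeal A n F a

/-- The image `u` of the first variable in `B`. -/
def uElt (A : Type) [CommRing A] (n : ℕ) (F a : A) : DihedralCoverRing A n F a :=
  Ideal.Quotient.mk _ (MvPolynomial.X 0)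

/-- The image `v` of the second variable in `B`. -/
def vElt (A : Type) [CommRing A] (n : ℕ) (F a : A) : DihedralCoverRing A n F a :=
  Ideal.Quotient.mk _ (MvPolynomial.X 1)

namespace DihedralAux

open Polynomial

section Dickson

variable {R : Type*} [CommRing R]

theorem eval_dickson_mul (x y : R) : ∀ m : ℕ,
    (Polynomial.dickson 1 (x * y) m).eval (x + y) = x ^ m + y ^ m
  | 0 => by simp [Polynomial.dickson_zero]; norm_num
  | 1 => by simp [Polynomial.dickson_one]
  | (m + 2) => by
    simp only [Polynomial.dickson_add_two, eval_sub, eval_mul, eval_X, eval_C,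
      eval_dickson_mul x y m, eval_dickson_mul x y (m + 1)]
    ring

theorem dickson_natDegree_le (c : R) : ∀ m : ℕ, (dickson 1 c m).natDegree ≤ m
  | 0 => by
    have h : (dickson 1 c 0 : R[X]) = 2 := by
      rw [Polynomial.dickson_zero]; norm_num
    simp [h]
  | 1 => by simp [Polynomial.dickson_one, natDegree_X_le]
  | (m + 2) => by
    rw [Polynomial.dickson_add_two]
    refine (natDegree_sub_le _ _).trans (max_le ?_ ?_)
    · refine (natDegree_mul_le).trans ?_
      have h1 := dickson_natDegree_le c (m + 1)
      have h2 := natDegree_X_le (R := R)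
      omega
    · exact (natDegree_mul_le).trans (by
        have := dickson_natDegree_le c m
        simp [natDegree_C]; omega)

theorem dickson_coeff_self (c : R) : ∀ m : ℕ, (dickson 1 c (m + 1)).coeff (m + 1) = 1
  | 0 => by simp [Polynomial.dickson_one]
  | (m + 1) => by
    rw [show m + 1 + 1 = m + 2 from rfl, Polynomial.dickson_add_two, coeff_sub,
      coeff_X_mul, dickson_coeff_self c m, coeff_C_mul,
      Polynomial.coeff_eq_zero_of_natDegree_lt
        (lt_of_le_of_lt (dickson_natDegree_le c m) (by omega))]
    ring

theorem dickson_monic (c : R) (m : ℕ) (hm : 1 ≤ m) : (dickson 1 c m).Monic := by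
  obtain ⟨k, rfl⟩ := Nat.exists_eq_add_of_le hm
  exact monic_of_natDegree_le_of_coeff_eq_one _ (dickson_natDegree_le c _)
    (by rw [add_comm] at *; exact dickson_coeff_self c k)

theorem dickson_natDegree [Nontrivial R] (c : R) (m : ℕ) (hm : 1 ≤ m) :
    (dickson 1 c m).natDegree = m := by
  refine le_antisymm (dickson_natDegree_le c m) ?_
  obtain ⟨k, rfl⟩ := Nat.exists_eq_add_of_le hm
  refine Polynomial.le_natDegree_of_ne_zero ?_
  rw [add_comm] at *
  rw [dickson_coeff_self c k]
  exact one_ne_zero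

end Dickson

section Main

variable (A : Type) [CommRing A] (n : ℕ) (F a : A)

/-- first generator -/
def gOne : MvPolynomial (Fin 2) A :=
  MvPolynomial.X 0 * MvPolynomial.X 1 - MvPolynomial.C F

/-- second generator -/
def gTwo : MvPolynomial (Fin 2) A :=
  MvPolynomial.X 0 ^ n + MvPolynomial.X 1 ^ n - MvPolynomial.C (2 * a)

theorem dihedralIdeal_eq : dihedralIdeal A n F a = Ideal.span {gOne A F, gTwo A n a} := rfl

theorem mk_eq_mk_of (p q x y : MvPolynomial (Fin 2) A)
    (h : p - q = x * gOne A F + y * gTwo A n a) :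
    Ideal.Quotient.mk (dihedralIdeal A n F a) p = Ideal.Quotient.mk _ q := by
  rw [Ideal.Quotient.eq, dihedralIdeal_eq]
  exact Ideal.mem_span_pair.mpr ⟨x, y, h.symm⟩

theorem mk_C_eq (r : A) :
    Ideal.Quotient.mk (dihedralIdeal A n F a) (MvPolynomial.C r) =
      algebraMap A (DihedralCoverRing A n F a) r := by
  rw [← MvPolynomial.algebraMap_eq, Ideal.Quotient.mk_algebraMap]

theorem rel_uv : uElt A n F a * vElt A n F a = algebraMap A _ F := by
  rw [uElt, vElt, ← map_mul, ← mk_C_eq]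
  exact mk_eq_mk_of A n F a _ _ 1 0 (by rw [gOne]; ring)

theorem rel_pow : uElt A n F a ^ n + vElt A n F a ^ n = algebraMap A _ (2 * a) := by
  rw [uElt, vElt, ← map_pow, ← map_pow, ← map_add, ← mk_C_eq]
  exact mk_eq_mk_of A n F a _ _ 0 1 (by rw [gTwo]; ring)

/-- the polynomial whose root is `u+v` -/
def Dpoly : A[X] := dickson 1 F n - C (2 * a)

theorem Dpoly_monic (hn : 1 ≤ n) : (Dpoly A n F a).Monic := by
  rcases subsingleton_or_nontrivial A with h | h
  · exact Subsingleton.elim _ _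
  · refine (dickson_monic F n hn).sub_of_left ?_
    refine degree_C_le.trans_lt ?_
    rw [Polynomial.degree_eq_natDegree (dickson_monic F n hn).ne_zero,
      dickson_natDegree F n hn]
    exact_mod_cast hn

theorem Dpoly_natDegree [Nontrivial A] (hn : 1 ≤ n) : (Dpoly A n F a).natDegree = n := by
  have hd : (C (2 * a)).degree < (dickson 1 F n).degree := by
    refine degree_C_le.trans_lt ?_
    rw [Polynomial.degree_eq_natDegree (dickson_monic F n hn).ne_zero,
      dickson_natDegree F n hn]
    exact_mod_cast hn
  refine natDegree_eq_of_degree_eq_some ?_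
  rw [Dpoly]
  rw [degree_sub_eq_left_of_degree_lt hd,
    Polynomial.degree_eq_natDegree (dickson_monic F n hn).ne_zero,
    dickson_natDegree F n hn]

/-- `D = A[p]` -/
abbrev Drng : Type := AdjoinRoot (Dpoly A n F a)

abbrev pRoot : Drng A n F a := AdjoinRoot.root _

/-- the quadratic whose root is `u` -/
def Gpoly : Polynomial (Drng A n F a) :=
  X ^ 2 - C (pRoot A n F a) * X + C (algebraMap A _ F)

theorem Gpoly_monic : (Gpoly A n F a).Monic := by
  have h : Gpoly A n F a =
      X ^ 2 + (C (-(pRoot A n F a)) * X + C (algebraMap A (Drng A n F a) F)) := by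
    rw [Gpoly, map_neg]; ring
  rw [h]
  exact monic_X_pow_add (degree_linear_le.trans_lt (by decide))

theorem Drng_nontrivial [Nontrivial A] (hn : 1 ≤ n) : Nontrivial (Drng A n F a) := by
  let pb := AdjoinRoot.powerBasis' (Dpoly_monic A n F a hn)
  haveI : Nonempty (Fin pb.dim) := by
    rw [show pb.dim = (Dpoly A n F a).natDegree from rfl, Dpoly_natDegree A n F a hn]
    exact ⟨⟨0, hn⟩⟩
  obtain ⟨x, y, hxy⟩ := exists_pair_ne (Fin pb.dim →₀ A)
  exact ⟨pb.basis.repr.symm x, pb.basis.repr.symm y,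
    fun h => hxy (pb.basis.repr.symm.injective h)⟩

theorem Gpoly_natDegree (hnt : Nontrivial (Drng A n F a)) : (Gpoly A n F a).natDegree = 2 := by
  have h : Gpoly A n F a =
      X ^ 2 + (C (-(pRoot A n F a)) * X + C (algebraMap A (Drng A n F a) F)) := by
    rw [Gpoly, map_neg]; ring
  rw [h]
  refine natDegree_eq_of_degree_eq_some ?_
  rw [degree_add_eq_left_of_degree_lt, degree_X_pow]
  rw [degree_X_pow]
  exact degree_linear_le.trans_lt (by decide)

abbrev Rrng : Type := AdjoinRoot (Gpoly A n F a)

abbrev rRoot : Rrng A n F a := AdjoinRoot.root _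

abbrev pR : Rrng A n F a := algebraMap (Drng A n F a) _ (pRoot A n F a)

theorem hD0 :
    Polynomial.eval₂ (algebraMap A (DihedralCoverRing A n F a))
      (uElt A n F a + vElt A n F a) (Dpoly A n F a) = 0 := by
  rw [Polynomial.eval₂_eq_eval_map, Dpoly, Polynomial.map_sub, map_dickson, Polynomial.map_C,
    eval_sub, eval_C]
  rw [show algebraMap A (DihedralCoverRing A n F a) F = uElt A n F a * vElt A n F a from
    (rel_uv A n F a).symm]
  rw [eval_dickson_mul, rel_pow A n F a, sub_self]

/-- the map `D → B`, `p ↦ u + v` -/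
def PhiD : Drng A n F a →+* DihedralCoverRing A n F a :=
  AdjoinRoot.lift (algebraMap A _) (uElt A n F a + vElt A n F a) (hD0 A n F a)

theorem PhiD_pRoot : PhiD A n F a (pRoot A n F a) = uElt A n F a + vElt A n F a :=
  AdjoinRoot.lift_root _

theorem PhiD_algebraMap (r : A) :
    PhiD A n F a (algebraMap A (Drng A n F a) r) = algebraMap A _ r :=
  AdjoinRoot.lift_of _

theorem hG0 :
    Polynomial.eval₂ (PhiD A n F a) (uElt A n F a) (Gpoly A n F a) = 0 := by
  rw [Gpoly]
  simp only [Polynomial.eval₂_add, Polynomial.eval₂_sub, Polynomial.eval₂_mul,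
    Polynomial.eval₂_pow, Polynomial.eval₂_X, Polynomial.eval₂_C]
  rw [PhiD_pRoot, PhiD_algebraMap]
  rw [show algebraMap A (DihedralCoverRing A n F a) F = uElt A n F a * vElt A n F a from
    (rel_uv A n F a).symm]
  ring

/-- the map `R → B`, as a ring hom -/
def PhiR : Rrng A n F a →+* DihedralCoverRing A n F a :=
  AdjoinRoot.lift (PhiD A n F a) (uElt A n F a) (hG0 A n F a)

theorem PhiR_algebraMap (r : A) :
    PhiR A n F a (algebraMap A (Rrng A n F a) r) = algebraMap A _ r := by
  rw [IsScalarTower.algebraMap_apply A (Drng A n F a) (Rrng A n F a)]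
  rw [show algebraMap (Drng A n F a) (Rrng A n F a) = AdjoinRoot.of _ from rfl]
  rw [PhiR, AdjoinRoot.lift_of]
  rw [show algebraMap A (Drng A n F a) = AdjoinRoot.of _ from rfl]
  rw [PhiD, AdjoinRoot.lift_of]

/-- the map `R → B`, as an algebra map -/
def Phi : Rrng A n F a →ₐ[A] DihedralCoverRing A n F a :=
  { PhiR A n F a with commutes' := PhiR_algebraMap A n F a }

theorem Phi_rRoot : Phi A n F a (rRoot A n F a) = uElt A n F a := by
  show PhiR A n F a (rRoot A n F a) = uElt A n F a
  exact AdjoinRoot.lift_root _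

theorem Phi_pR : Phi A n F a (pR A n F a) = uElt A n F a + vElt A n F a := by
  show PhiR A n F a (AdjoinRoot.of _ (pRoot A n F a)) = _
  rw [show (PhiR A n F a) ((AdjoinRoot.of (Gpoly A n F a)) (pRoot A n F a)) =
    PhiD A n F a (pRoot A n F a) from AdjoinRoot.lift_of _]
  exact PhiD_pRoot A n F a

/-- images of the two variables under the inverse map -/
def gvec : Fin 2 → Rrng A n F a := ![rRoot A n F a, pR A n F a - rRoot A n F a]

theorem hroot :
    rRoot A n F a ^ 2 - pR A n F a * rRoot A n F a + algebraMap A (Rrng A n F a) F = 0 := by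
  have h := AdjoinRoot.eval₂_root (Gpoly A n F a)
  rw [Gpoly] at h
  simp only [Polynomial.eval₂_add, Polynomial.eval₂_sub, Polynomial.eval₂_mul,
    Polynomial.eval₂_pow, Polynomial.eval₂_X, Polynomial.eval₂_C] at h
  rw [← AdjoinRoot.algebraMap_eq, ← IsScalarTower.algebraMap_apply] at h
  exact h

theorem hPsi0 : ∀ x ∈ dihedralIdeal A n F a, MvPolynomial.aeval (gvec A n F a) x = 0 := by
  intro x hx
  have hle : dihedralIdeal A n F a ≤ RingHom.ker (MvPolynomial.aeval (gvec A n F a)) := by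
    rw [dihedralIdeal_eq, Ideal.span_le]
    rintro y (rfl | rfl)
    · rw [SetLike.mem_coe, RingHom.mem_ker, gOne]
      simp only [map_sub, map_mul, MvPolynomial.aeval_X, MvPolynomial.algebraMap_eq,
        MvPolynomial.aeval_C]
      rw [gvec]
      simp only [Matrix.cons_val_zero, Matrix.cons_val_one, Matrix.head_cons]
      linear_combination -(hroot A n F a)
    · rw [SetLike.mem_coe, RingHom.mem_ker, gTwo]
      simp only [map_add, map_sub, map_pow, MvPolynomial.aeval_X, MvPolynomial.algebraMap_eq,
        MvPolynomial.aeval_C]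
      rw [gvec]
      simp only [Matrix.cons_val_zero, Matrix.cons_val_one, Matrix.head_cons]
      -- use the dickson identity
      have hxy : rRoot A n F a * (pR A n F a - rRoot A n F a) = algebraMap A (Rrng A n F a) F := by
        linear_combination -(hroot A n F a)
      have hkey := eval_dickson_mul (rRoot A n F a) (pR A n F a - rRoot A n F a) n
      rw [hxy] at hkey
      rw [show rRoot A n F a + (pR A n F a - rRoot A n F a) = pR A n F a by ring] at hkey
      rw [← hkey]
      -- now evaluate the dickson polynomial at pR
      have h2 : Polynomial.eval (pR A n F a) (dickson 1 (algebraMap A (Rrng A n F a) F) n) =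
          algebraMap A (Rrng A n F a) (2 * a) := by
        rw [← map_dickson (algebraMap A (Rrng A n F a)), ← Polynomial.eval₂_eq_eval_map,
          ← Polynomial.aeval_def, pR, Polynomial.aeval_algebraMap_apply]
        have h3 : (Polynomial.aeval (pRoot A n F a)) (dickson 1 F n) =
            algebraMap A (Drng A n F a) (2 * a) := by
          have h4 : (Polynomial.aeval (pRoot A n F a)) (dickson 1 F n - C (2 * a)) = 0 := by
            rw [show dickson 1 F n - C (2 * a) = Dpoly A n F a from rfl,
              AdjoinRoot.aeval_eq, AdjoinRoot.mk_self]
          rw [map_sub, Polynomial.aeval_C] at h4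
          linear_combination h4
        rw [h3, ← IsScalarTower.algebraMap_apply]
      rw [h2]
      ring
  exact hle hx

/-- the inverse map `B → R` -/
def Psi : DihedralCoverRing A n F a →ₐ[A] Rrng A n F a :=
  Ideal.Quotient.liftₐ (dihedralIdeal A n F a) (MvPolynomial.aeval (gvec A n F a)) (hPsi0 A n F a)

theorem Psi_mk (p : MvPolynomial (Fin 2) A) :
    Psi A n F a (Ideal.Quotient.mk _ p) = MvPolynomial.aeval (gvec A n F a) p := by
  rw [Psi, Ideal.Quotient.liftₐ_apply]
  rfl

theorem Psi_u : Psi A n F a (uElt A n F a) = rRoot A n F a := by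
  rw [uElt, Psi_mk, MvPolynomial.aeval_X, gvec]
  simp

theorem Psi_v : Psi A n F a (vElt A n F a) = pR A n F a - rRoot A n F a := by
  rw [vElt, Psi_mk, MvPolynomial.aeval_X, gvec]
  simp

theorem comp_Phi_Psi (b : DihedralCoverRing A n F a) : Phi A n F a (Psi A n F a b) = b := by
  obtain ⟨p, rfl⟩ := Ideal.Quotient.mk_surjective b
  induction p using MvPolynomial.induction_on with
  | C r =>
    rw [mk_C_eq, AlgHom.commutes, AlgHom.commutes]
  | add p q hp hq =>
    rw [map_add, map_add, map_add, hp, hq]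
  | mul_X p i hp =>
    rw [map_mul, map_mul, map_mul, hp]
    congr 1
    fin_cases i
    · show Phi A n F a (Psi A n F a (uElt A n F a)) = uElt A n F a
      rw [Psi_u, Phi_rRoot]
    · show Phi A n F a (Psi A n F a (vElt A n F a)) = vElt A n F a
      rw [Psi_v, map_sub, Phi_rRoot, Phi_pR]
      ring

theorem adjoin_top :
    Algebra.adjoin A ({pR A n F a, rRoot A n F a} : Set (Rrng A n F a)) = ⊤ := by
  rw [eq_top_iff]
  rintro x -
  obtain ⟨q, rfl⟩ := AdjoinRoot.mk_surjective x
  induction q using Polynomial.induction_on' with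
  | add p q hp hq => rw [map_add]; exact add_mem hp hq
  | monomial k d =>
    rw [← Polynomial.C_mul_X_pow_eq_monomial, map_mul, map_pow, AdjoinRoot.mk_X, AdjoinRoot.mk_C]
    refine mul_mem ?_ (pow_mem (Algebra.subset_adjoin (by simp)) _)
    obtain ⟨q', rfl⟩ := AdjoinRoot.mk_surjective d
    show algebraMap (Drng A n F a) (Rrng A n F a) _ ∈ _
    rw [← AdjoinRoot.aeval_eq, ← Polynomial.aeval_algebraMap_apply]
    have : (Polynomial.aeval (pR A n F a)) q' ∈
        Algebra.adjoin A ({pR A n F a} : Set (Rrng A n F a)) := by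
      rw [Algebra.adjoin_singleton_eq_range_aeval]
      exact ⟨q', rfl⟩
    exact Algebra.adjoin_mono (by simp) this

theorem comp_Psi_Phi (x : Rrng A n F a) : Psi A n F a (Phi A n F a x) = x := by
  have hx : x ∈ Algebra.adjoin A ({pR A n F a, rRoot A n F a} : Set (Rrng A n F a)) := by
    rw [adjoin_top]; trivial
  induction hx using Algebra.adjoin_induction with
  | mem y hy =>
    simp only [Set.mem_insert_iff, Set.mem_singleton_iff] at hy
    rcases hy with rfl | rfl
    · rw [Phi_pR, map_add, Psi_u, Psi_v]; ring
    · rw [Phi_rRoot, Psi_u]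
  | algebraMap r => rw [AlgHom.commutes, AlgHom.commutes]
  | add y z hy hz hy' hz' => rw [map_add, map_add, hy', hz']
  | mul y z hy hz hy' hz' => rw [map_mul, map_mul, hy', hz']

theorem Phi_bijective : Function.Bijective (Phi A n F a) :=
  ⟨Function.LeftInverse.injective (comp_Psi_Phi A n F a),
    fun b => ⟨Psi A n F a b, comp_Phi_Psi A n F a b⟩⟩

theorem smul_eq_algebraMap_mul (r : A) (x : DihedralCoverRing A n F a) :
    r • x = algebraMap A (DihedralCoverRing A n F a) r * x := by
  rw [← algebraMap_smul (DihedralCoverRing A n F a) r x, smul_eq_mul]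

theorem exists_linearEquiv [Nontrivial A] (hn : 1 ≤ n) :
    Nonempty (Rrng A n F a ≃ₗ[A] ((Fin n ⊕ Fin n) →₀ A)) := by
  haveI hDnt := Drng_nontrivial A n F a hn
  let bD : Module.Basis (Fin (Dpoly A n F a).natDegree) A (Drng A n F a) :=
    (AdjoinRoot.powerBasis' (Dpoly_monic A n F a hn)).basis
  let bR : Module.Basis (Fin (Gpoly A n F a).natDegree) (Drng A n F a) (Rrng A n F a) :=
    (AdjoinRoot.powerBasis' (Gpoly_monic A n F a)).basis
  let bT := bD.smulTower bR
  have hcard : Fintype.card (Fin (Dpoly A n F a).natDegree × Fin (Gpoly A n F a).natDegree)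
      = Fintype.card (Fin n ⊕ Fin n) := by
    simp [Dpoly_natDegree A n F a hn, Gpoly_natDegree A n F a hDnt]
    omega
  exact ⟨(bT.reindex (Fintype.equivOfCardEq hcard)).repr⟩

end Main

end DihedralAux

set_option maxHeartbeats 1000000 in
theorem dihedralCoverRing_free_of_rank_two_n
    (A : Type) [CommRing A] (h2 : IsUnit (2 : A)) (n : ℕ) (hn : 1 ≤ n) (F a : A) :
    Module.Free A (DihedralCoverRing A n F a) ∧
    ∃ b : Module.Basis (Fin n ⊕ Fin n) A (DihedralCoverRing A n F a),
      (∀ k : Fin n, b (Sum.inl k) = uElt A n F a ^ (k : ℕ)) ∧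
      (∀ k : Fin n, 0 < (k : ℕ) → b (Sum.inr k) = vElt A n F a ^ (k : ℕ)) ∧
      (∀ k : Fin n, (k : ℕ) = 0 →
        b (Sum.inr k) = uElt A n F a ^ n - vElt A n F a ^ n) := by
  rcases subsingleton_or_nontrivial A with hA | hA
  · -- the trivial ring case
    haveI : Subsingleton (DihedralCoverRing A n F a) := by
      haveI : Subsingleton (MvPolynomial (Fin 2) A) := by
        constructor
        intro p q
        ext d
        exact Subsingleton.elim _ _
      exact Ideal.Quotient.mk_surjective.subsingleton
    haveI : Subsingleton ((Fin n ⊕ Fin n) →₀ A) := by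
      constructor
      intro p q
      ext d
      exact Subsingleton.elim _ _
    let e : DihedralCoverRing A n F a ≃ₗ[A] ((Fin n ⊕ Fin n) →₀ A) :=
      LinearEquiv.ofLinear 0 0 (LinearMap.ext fun x => Subsingleton.elim _ _)
        (LinearMap.ext fun x => Subsingleton.elim _ _)
    let b : Module.Basis (Fin n ⊕ Fin n) A (DihedralCoverRing A n F a) := Module.Basis.ofRepr e
    exact ⟨Module.Free.of_basis b, b, fun k => Subsingleton.elim _ _,
      fun k _ => Subsingleton.elim _ _, fun k _ => Subsingleton.elim _ _⟩
  · -- the nontrivial case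
    obtain ⟨c, hc⟩ := h2.exists_right_inv
    obtain ⟨m, rfl⟩ : ∃ m, n = m + 1 := ⟨n - 1, (Nat.succ_pred_eq_of_pos hn).symm⟩
    have huv := DihedralAux.rel_uv A (m + 1) F a
    have hpow := DihedralAux.rel_pow A (m + 1) F a
    set u := uElt A (m + 1) F a with hu_def
    set v := vElt A (m + 1) F a with hv_def
    -- the candidate basis vectors
    set bm : Fin (m + 1) ⊕ Fin (m + 1) → DihedralCoverRing A (m + 1) F a :=
      Sum.elim (fun k => u ^ (k : ℕ))
      (fun k => if (k : ℕ) = 0 then u ^ (m + 1) - v ^ (m + 1) else v ^ (k : ℕ)) with hbm_def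
    set S : Submodule A (DihedralCoverRing A (m + 1) F a) :=
      Submodule.span A (Set.range bm) with hS_def
    -- identities
    have E1 : (2 : DihedralCoverRing A (m + 1) F a) * u ^ (m + 1) = algebraMap A _ (2 * a) + (u ^ (m + 1) - v ^ (m + 1)) := by
      linear_combination hpow
    have E2 : (2 : DihedralCoverRing A (m + 1) F a) * v ^ (m + 1) = algebraMap A _ (2 * a) - (u ^ (m + 1) - v ^ (m + 1)) := by
      linear_combination hpow
    have E3 : u * (u ^ (m + 1) - v ^ (m + 1)) =
        algebraMap A _ (2 * a) * u - 2 * algebraMap A _ F * v ^ m := by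
      linear_combination u * hpow - 2 * v ^ m * huv
    have E4 : v * (u ^ (m + 1) - v ^ (m + 1)) =
        2 * algebraMap A _ F * u ^ m - algebraMap A _ (2 * a) * v := by
      linear_combination 2 * u ^ m * huv - v * hpow
    have E5 : ∀ j : ℕ, u * v ^ (j + 1) = algebraMap A _ F * v ^ j := by
      intro j; linear_combination v ^ j * huv
    have E6 : ∀ j : ℕ, v * u ^ (j + 1) = algebraMap A _ F * u ^ j := by
      intro j; linear_combination u ^ j * huv
    -- memberships
    have hsmul : ∀ (r : A) (x : DihedralCoverRing A (m + 1) F a),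
        algebraMap A (DihedralCoverRing A (m + 1) F a) r * x = r • x := fun r x =>
      (DihedralAux.smul_eq_algebraMap_mul A (m + 1) F a r x).symm
    have h1S : (1 : DihedralCoverRing A (m + 1) F a) ∈ S := by
      refine Submodule.subset_span ⟨Sum.inl ⟨0, by omega⟩, ?_⟩
      simp [hbm_def]
    have hsS : u ^ (m + 1) - v ^ (m + 1) ∈ S := by
      refine Submodule.subset_span ⟨Sum.inr ⟨0, by omega⟩, ?_⟩
      simp [hbm_def]
    have hukS : ∀ k : ℕ, k < m + 1 → u ^ k ∈ S := by
      intro k hk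
      refine Submodule.subset_span ⟨Sum.inl ⟨k, hk⟩, ?_⟩
      simp [hbm_def]
    have hvkS : ∀ k : ℕ, k ≠ 0 → k < m + 1 → v ^ k ∈ S := by
      intro k hk0 hk
      refine Submodule.subset_span ⟨Sum.inr ⟨k, hk⟩, ?_⟩
      simp [hbm_def, hk0]
    have hsmul2 : ∀ x : DihedralCoverRing A (m + 1) F a,
        x = c • ((2 : DihedralCoverRing A (m + 1) F a) * x) := by
      intro x
      rw [← hsmul c (2 * x), ← mul_assoc,
        ← map_ofNat (algebraMap A (DihedralCoverRing A (m + 1) F a)) 2, ← map_mul,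
        mul_comm c 2, hc, map_one, one_mul]
    have hunS : u ^ (m + 1) ∈ S := by
      rw [hsmul2 (u ^ (m + 1)), E1]
      refine Submodule.smul_mem _ _ (add_mem ?_ hsS)
      rw [← mul_one (algebraMap A (DihedralCoverRing A (m + 1) F a) (2 * a)), hsmul]
      exact Submodule.smul_mem _ _ h1S
    have hvnS : v ^ (m + 1) ∈ S := by
      rw [hsmul2 (v ^ (m + 1)), E2]
      refine Submodule.smul_mem _ _ (sub_mem ?_ hsS)
      rw [← mul_one (algebraMap A (DihedralCoverRing A (m + 1) F a) (2 * a)), hsmul]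
      exact Submodule.smul_mem _ _ h1S
    have hu_le : ∀ k : ℕ, k ≤ m + 1 → u ^ k ∈ S := by
      intro k hk
      rcases eq_or_lt_of_le hk with rfl | hlt
      · exact hunS
      · exact hukS k hlt
    have hv_le : ∀ k : ℕ, k ≤ m + 1 → v ^ k ∈ S := by
      intro k hk
      rcases eq_or_lt_of_le hk with rfl | hlt
      · exact hvnS
      · rcases Nat.eq_zero_or_pos k with rfl | hk0
        · rw [pow_zero]; exact h1S
        · exact hvkS k hk0.ne' hlt
    have huS : u ∈ S := by
      rw [show u = u ^ 1 from (pow_one u).symm]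
      exact hu_le 1 (by omega)
    have hvS : v ∈ S := by
      rw [show v = v ^ 1 from (pow_one v).symm]
      exact hv_le 1 (by omega)
    -- multiplication closure
    have hmul_gen : ∀ (w : DihedralCoverRing A (m + 1) F a),
        w = u ∨ w = v → ∀ i, w * bm i ∈ S := by
      rintro w (rfl | rfl) i
      · cases i with
        | inl k =>
          have : u * bm (Sum.inl k) = u ^ ((k : ℕ) + 1) := by
            simp [hbm_def, pow_succ]; ring
          rw [this]
          exact hu_le _ (by omega)
        | inr k =>
          by_cases hk0 : (k : ℕ) = 0
          · have : bm (Sum.inr k) = u ^ (m + 1) - v ^ (m + 1) := by simp only [hbm_def, Sum.elim_inr, hk0, ↓reduceIte]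
            rw [this, E3]
            refine sub_mem ?_ ?_
            · rw [hsmul]
              exact Submodule.smul_mem _ _ huS
            · rw [← map_ofNat (algebraMap A (DihedralCoverRing A (m + 1) F a)) 2,
                ← map_mul, hsmul]
              exact Submodule.smul_mem _ _ (hv_le m (by omega))
          · obtain ⟨j, hj⟩ : ∃ j, (k : ℕ) = j + 1 := ⟨(k : ℕ) - 1, by omega⟩
            have : bm (Sum.inr k) = v ^ ((k : ℕ)) := by simp only [hbm_def, Sum.elim_inr, hk0, ↓reduceIte]
            rw [this, hj, E5 j, hsmul]
            exact Submodule.smul_mem _ _ (hv_le j (by have := k.2; omega))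
      · cases i with
        | inl k =>
          rcases Nat.eq_zero_or_pos (k : ℕ) with hk0 | hk0
          · have : bm (Sum.inl k) = 1 := by simp [hbm_def, hk0]
            rw [this, mul_one]
            exact hvS
          · obtain ⟨j, hj⟩ : ∃ j, (k : ℕ) = j + 1 := ⟨(k : ℕ) - 1, by omega⟩
            have : v * bm (Sum.inl k) = v * u ^ ((k : ℕ)) := by simp [hbm_def]
            rw [this, hj, E6 j, hsmul]
            exact Submodule.smul_mem _ _ (hu_le j (by have := k.2; omega))
        | inr k =>
          by_cases hk0 : (k : ℕ) = 0
          · have : bm (Sum.inr k) = u ^ (m + 1) - v ^ (m + 1) := by simp only [hbm_def, Sum.elim_inr, hk0, ↓reduceIte]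
            rw [this, E4]
            refine sub_mem ?_ ?_
            · rw [← map_ofNat (algebraMap A (DihedralCoverRing A (m + 1) F a)) 2,
                ← map_mul, hsmul]
              exact Submodule.smul_mem _ _ (hu_le m (by omega))
            · rw [hsmul]
              exact Submodule.smul_mem _ _ hvS
          · have : v * bm (Sum.inr k) = v ^ ((k : ℕ) + 1) := by
              simp only [hbm_def, Sum.elim_inr, hk0, ↓reduceIte]; ring
            rw [this]
            exact hv_le _ (by have := k.2; omega)
    have hmul : ∀ (w : DihedralCoverRing A (m + 1) F a),
        w = u ∨ w = v → ∀ x ∈ S, w * x ∈ S := by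
      intro w hw x hx
      induction hx using Submodule.span_induction with
      | mem y hy =>
        obtain ⟨i, rfl⟩ := hy
        exact hmul_gen w hw i
      | zero => rw [mul_zero]; exact zero_mem _
      | add y z hy hz ihy ihz => rw [mul_add]; exact add_mem ihy ihz
      | smul r y hy ihy => rw [mul_smul_comm]; exact Submodule.smul_mem _ _ ihy
    -- spanning
    have htop : ∀ y : DihedralCoverRing A (m + 1) F a, y ∈ S := by
      intro y
      obtain ⟨p, rfl⟩ := Ideal.Quotient.mk_surjective y
      induction p using MvPolynomial.induction_on with
      | C r =>
        rw [DihedralAux.mk_C_eq, ← mul_one (algebraMap A (DihedralCoverRing A (m + 1) F a) r),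
          hsmul]
        exact Submodule.smul_mem _ _ h1S
      | add p q hp hq => rw [map_add]; exact add_mem hp hq
      | mul_X p i hp =>
        rw [map_mul, mul_comm]
        fin_cases i
        · exact hmul u (Or.inl rfl) _ hp
        · exact hmul v (Or.inr rfl) _ hp
    -- the linear map from the free module
    set φlin := Finsupp.linearCombination A bm with hφ_def
    have hφsurj : Function.Surjective φlin := by
      rw [← LinearMap.range_eq_top, Finsupp.range_linearCombination, eq_top_iff]
      exact fun y _ => htop y
    obtain ⟨eR⟩ := DihedralAux.exists_linearEquiv A (m + 1) F a (by omega)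
    let eΦ : DihedralAux.Rrng A (m + 1) F a ≃ₗ[A] DihedralCoverRing A (m + 1) F a :=
      LinearEquiv.ofBijective (DihedralAux.Phi A (m + 1) F a).toLinearMap
        (DihedralAux.Phi_bijective A (m + 1) F a)
    let EB : DihedralCoverRing A (m + 1) F a ≃ₗ[A] ((Fin (m + 1) ⊕ Fin (m + 1)) →₀ A) :=
      eΦ.symm.trans eR
    let endo := EB.toLinearMap ∘ₗ φlin
    have hendo_surj : Function.Surjective endo := EB.surjective.comp hφsurj
    have hendo_inj : Function.Injective endo :=
      OrzechProperty.injective_of_surjective_endomorphism endo hendo_surj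
    have hφinj : Function.Injective φlin := by
      intro x y hxy
      exact hendo_inj (by simp only [endo, LinearMap.comp_apply, hxy])
    let e := LinearEquiv.ofBijective φlin ⟨hφinj, hφsurj⟩
    let b : Module.Basis (Fin (m + 1) ⊕ Fin (m + 1)) A (DihedralCoverRing A (m + 1) F a) :=
      Module.Basis.ofRepr e.symm
    have hb : ∀ i, b i = bm i := by
      intro i
      have h1 : e (Finsupp.single i 1) = b i := by
        have h0 := b.repr_symm_single_one i
        rwa [show b.repr = e.symm from rfl, LinearEquiv.symm_symm] at h0
      rw [← h1]
      show φlin (Finsupp.single i 1) = bm i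
      rw [Finsupp.linearCombination_single, one_smul]
    refine ⟨Module.Free.of_basis b, b, ?_, ?_, ?_⟩
    · intro k
      rw [hb]
      simp [hbm_def]
    · intro k hk
      rw [hb]
      simp only [hbm_def, Sum.elim_inr, hk.ne', ↓reduceIte]
    · intro k hk
      rw [hb]
      simp only [hbm_def, Sum.elim_inr, hk, ↓reduceIte]
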